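/- Gluing lemma for half-space pieces (Lemma 6.3, topological case): Let n ≥ 1 and let H ⊆ ℝ^n be a closed set, and let A', B' ⊆ ℝ^n be closed sets with A' ∪ B' = ℝ^n and A' ∩ B' = H. Suppose there exist homeomorphisms g : A' → {x ∈ ℝ^n : x_n ≥ 0} and h : B' → {x ∈ ℝ^n : x_n ≤ 0} (with respect to the subspace topologies) such that g(H) = {x : x_n = 0} = h(H). Then there exists a homeomorphism F : ℝ^n → ℝ^n with F(H) = {x ∈ ℝ^n : x_n = 0}. -/

import Mathlib

open Set

namespace GlueHS

lemma continuous_of_union_closed {X Y : Type*} [TopologicalSpace X] [TopologicalSpace Y]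
    {A B : Set X} (hA : IsClosed A) (hB : IsClosed B) (hcover : A ∪ B = Set.univ)
    {f : X → Y} (hfA : ContinuousOn f A) (hfB : ContinuousOn f B) : Continuous f := by
  rw [continuous_iff_isClosed]
  intro C hC
  have h1 := hfA.preimage_isClosed_of_isClosed hA hC
  have h2 := hfB.preimage_isClosed_of_isClosed hB hC
  have he : f ⁻¹' C = (A ∩ f ⁻¹' C) ∪ (B ∩ f ⁻¹' C) := by
    rw [← Set.union_inter_distrib_right, hcover, Set.univ_inter]
  rw [he]; exact h1.union h2

variable {n : ℕ} {i : Fin n}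

lemma cont_apply : Continuous fun x : EuclideanSpace ℝ (Fin n) => x i :=
  (EuclideanSpace.proj (𝕜 := ℝ) i).continuous

/-- projection onto the hyperplane `x i = 0`. -/
noncomputable def pr (i : Fin n) (x : EuclideanSpace ℝ (Fin n)) : EuclideanSpace ℝ (Fin n) :=
  x - x i • EuclideanSpace.single i (1:ℝ)

lemma pr_i (x : EuclideanSpace ℝ (Fin n)) : pr i x i = 0 := by
  simp [pr, PiLp.sub_apply, PiLp.smul_apply, EuclideanSpace.single_apply]

lemma pr_of_zero {x : EuclideanSpace ℝ (Fin n)} (hx : x i = 0) : pr i x = x := by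
  simp [pr, hx]

lemma coord_add_smul (p : EuclideanSpace ℝ (Fin n)) (hp : p i = 0) (c : ℝ) :
    (p + c • EuclideanSpace.single i (1:ℝ) : EuclideanSpace ℝ (Fin n)) i = c := by
  simp [PiLp.add_apply, PiLp.smul_apply, EuclideanSpace.single_apply, smul_eq_mul, hp]

lemma pr_add (p : EuclideanSpace ℝ (Fin n)) (hp : p i = 0) (c : ℝ) :
    pr i (p + c • EuclideanSpace.single i (1:ℝ)) = p := by
  simp [pr, coord_add_smul p hp c]

lemma cont_pr : Continuous (pr i) := by
  exact continuous_id.sub (Continuous.smul cont_apply continuous_const)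

/-- extend a homeomorphism of the hyperplane to all of space, levelwise. -/
noncomputable def extend
    (φ : {x : EuclideanSpace ℝ (Fin n) | x i = 0} ≃ₜ {x : EuclideanSpace ℝ (Fin n) | x i = 0}) :
    EuclideanSpace ℝ (Fin n) ≃ₜ EuclideanSpace ℝ (Fin n) where
  toFun x := ↑(φ ⟨pr i x, pr_i x⟩) + x i • EuclideanSpace.single i (1:ℝ)
  invFun x := ↑(φ.symm ⟨pr i x, pr_i x⟩) + x i • EuclideanSpace.single i (1:ℝ)
  left_inv x := by
    have h0 : (↑(φ ⟨pr i x, pr_i x⟩) : EuclideanSpace ℝ (Fin n)) i = 0 := (φ _).2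
    have hc := coord_add_smul _ h0 (x i)
    have hp := pr_add _ h0 (x i)
    show ↑(φ.symm ⟨pr i (↑(φ ⟨pr i x, pr_i x⟩) + x i • EuclideanSpace.single i (1:ℝ) :
        EuclideanSpace ℝ (Fin n)), pr_i _⟩) +
        ((↑(φ ⟨pr i x, pr_i x⟩) + x i • EuclideanSpace.single i (1:ℝ) :
        EuclideanSpace ℝ (Fin n)) i) • EuclideanSpace.single i (1:ℝ) = x
    simp only [hp, hc, Subtype.coe_eta, Homeomorph.symm_apply_apply]
    simp [pr]
  right_inv x := by
    have h0 : (↑(φ.symm ⟨pr i x, pr_i x⟩) : EuclideanSpace ℝ (Fin n)) i = 0 := (φ.symm _).2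
    have hc := coord_add_smul _ h0 (x i)
    have hp := pr_add _ h0 (x i)
    show ↑(φ ⟨pr i (↑(φ.symm ⟨pr i x, pr_i x⟩) + x i • EuclideanSpace.single i (1:ℝ) :
        EuclideanSpace ℝ (Fin n)), pr_i _⟩) +
        ((↑(φ.symm ⟨pr i x, pr_i x⟩) + x i • EuclideanSpace.single i (1:ℝ) :
        EuclideanSpace ℝ (Fin n)) i) • EuclideanSpace.single i (1:ℝ) = x
    simp only [hp, hc, Subtype.coe_eta, Homeomorph.apply_symm_apply]
    simp [pr]
  continuous_toFun := by
    exact ((continuous_subtype_val.comp (φ.continuous.comp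
      (Continuous.subtype_mk cont_pr _))).add (Continuous.smul cont_apply continuous_const))
  continuous_invFun := by
    exact ((continuous_subtype_val.comp (φ.symm.continuous.comp
      (Continuous.subtype_mk cont_pr _))).add (Continuous.smul cont_apply continuous_const))

variable (φ : {x : EuclideanSpace ℝ (Fin n) | x i = 0} ≃ₜ {x : EuclideanSpace ℝ (Fin n) | x i = 0})

lemma extend_coord (x : EuclideanSpace ℝ (Fin n)) : extend φ x i = x i := by
  show (↑(φ ⟨pr i x, pr_i x⟩) + x i • EuclideanSpace.single i (1:ℝ) :
      EuclideanSpace ℝ (Fin n)) i = x i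
  exact coord_add_smul _ (φ _).2 _

lemma extend_symm_coord (x : EuclideanSpace ℝ (Fin n)) : (extend φ).symm x i = x i := by
  show (↑(φ.symm ⟨pr i x, pr_i x⟩) + x i • EuclideanSpace.single i (1:ℝ) :
      EuclideanSpace ℝ (Fin n)) i = x i
  exact coord_add_smul _ (φ.symm _).2 _

lemma extend_of_zero {x : EuclideanSpace ℝ (Fin n)} (hx : x i = 0) :
    extend φ x = ↑(φ ⟨x, hx⟩) := by
  show (↑(φ ⟨pr i x, pr_i x⟩) + x i • EuclideanSpace.single i (1:ℝ) :
      EuclideanSpace ℝ (Fin n)) = ↑(φ ⟨x, hx⟩)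
  have he : (⟨pr i x, pr_i x⟩ : {x : EuclideanSpace ℝ (Fin n) | x i = 0}) = ⟨x, hx⟩ :=
    Subtype.ext (pr_of_zero hx)
  rw [he, hx]; simp

lemma extend_symm_of_zero {x : EuclideanSpace ℝ (Fin n)} (hx : x i = 0) :
    (extend φ).symm x = ↑(φ.symm ⟨x, hx⟩) := by
  show (↑(φ.symm ⟨pr i x, pr_i x⟩) + x i • EuclideanSpace.single i (1:ℝ) :
      EuclideanSpace ℝ (Fin n)) = ↑(φ.symm ⟨x, hx⟩)
  have he : (⟨pr i x, pr_i x⟩ : {x : EuclideanSpace ℝ (Fin n) | x i = 0}) = ⟨x, hx⟩ :=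
    Subtype.ext (pr_of_zero hx)
  rw [he, hx]; simp

end GlueHS
/-- Gluing lemma for half-space pieces (Lemma 6.3, topological case). -/
theorem gluing_half_spaces
    (n : ℕ) (hn : 1 ≤ n)
    (H A' B' : Set (EuclideanSpace ℝ (Fin n)))
    (hHcl : IsClosed H) (hAcl : IsClosed A') (hBcl : IsClosed B')
    (hunion : A' ∪ B' = Set.univ) (hinter : A' ∩ B' = H)
    (g : A' ≃ₜ {x : EuclideanSpace ℝ (Fin n) | 0 ≤ x ⟨n - 1, by omega⟩})
    (h : B' ≃ₜ {x : EuclideanSpace ℝ (Fin n) | x ⟨n - 1, by omega⟩ ≤ 0})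
    (hg : (fun p : A' => (g p : EuclideanSpace ℝ (Fin n)))
            '' {p : A' | (p : EuclideanSpace ℝ (Fin n)) ∈ H}
          = {x : EuclideanSpace ℝ (Fin n) | x ⟨n - 1, by omega⟩ = 0})
    (hh : (fun p : B' => (h p : EuclideanSpace ℝ (Fin n)))
            '' {p : B' | (p : EuclideanSpace ℝ (Fin n)) ∈ H}
          = {x : EuclideanSpace ℝ (Fin n) | x ⟨n - 1, by omega⟩ = 0}) :
    ∃ F : EuclideanSpace ℝ (Fin n) ≃ₜ EuclideanSpace ℝ (Fin n),
      ⇑F '' H = {x : EuclideanSpace ℝ (Fin n) | x ⟨n - 1, by omega⟩ = 0} := by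
  classical
  let E : Type := EuclideanSpace ℝ (Fin n)
  let i : Fin n := ⟨n - 1, by omega⟩
  have hHA : H ⊆ A' := by rw [← hinter]; exact Set.inter_subset_left
  have hHB : H ⊆ B' := by rw [← hinter]; exact Set.inter_subset_right
  have hBc : ∀ x, x ∉ A' → x ∈ B' := by
    intro x hx
    have hx2 : x ∈ A' ∪ B' := by rw [hunion]; trivial
    rcases hx2 with h1 | h1
    · exact absurd h1 hx
    · exact h1
  -- forward membership facts
  have gH : ∀ p : A', (p : E) ∈ H → (↑(g p) : E) i = 0 := by
    intro p hp
    have h1 : (↑(g p) : E) ∈ (fun p : A' => (g p : E)) ''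
        {p : A' | (p : E) ∈ H} := Set.mem_image_of_mem _ hp
    rw [hg] at h1
    exact h1
  have hH : ∀ p : B', (p : E) ∈ H → (↑(h p) : E) i = 0 := by
    intro p hp
    have h1 : (↑(h p) : E) ∈ (fun p : B' => (h p : E)) ''
        {p : B' | (p : E) ∈ H} := Set.mem_image_of_mem _ hp
    rw [hh] at h1
    exact h1
  have gS : ∀ (z : E) (hz : z i = 0) (hz' : 0 ≤ z i), (↑(g.symm ⟨z, hz'⟩) : E) ∈ H := by
    intro z hz hz'
    have h1 : z ∈ {x : E | x i = 0} := hz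
    rw [← hg] at h1
    obtain ⟨p, hp, hpz⟩ := h1
    have h2 : (⟨z, hz'⟩ : {x : E | 0 ≤ x i}) = g p := Subtype.ext hpz.symm
    rw [h2, Homeomorph.symm_apply_apply]
    exact hp
  have hS : ∀ (z : E) (hz : z i = 0) (hz' : z i ≤ 0), (↑(h.symm ⟨z, hz'⟩) : E) ∈ H := by
    intro z hz hz'
    have h1 : z ∈ {x : E | x i = 0} := hz
    rw [← hh] at h1
    obtain ⟨p, hp, hpz⟩ := h1
    have h2 : (⟨z, hz'⟩ : {x : E | x i ≤ 0}) = h p := Subtype.ext hpz.symm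
    rw [h2, Homeomorph.symm_apply_apply]
    exact hp
  -- the hyperplane correction homeomorphism
  let φ : {x : E | x i = 0} ≃ₜ {x : E | x i = 0} :=
    { toFun := fun y => ⟨↑(g ⟨↑(h.symm ⟨↑y, y.2.le⟩), hHA (hS ↑y y.2 y.2.le)⟩),
        gH _ (hS ↑y y.2 y.2.le)⟩
      invFun := fun z => ⟨↑(h ⟨↑(g.symm ⟨↑z, z.2.ge⟩), hHB (gS ↑z z.2 z.2.ge)⟩),
        hH _ (gS ↑z z.2 z.2.ge)⟩
      left_inv := by
        intro y
        apply Subtype.ext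
        simp only [Subtype.coe_eta, Homeomorph.symm_apply_apply, Homeomorph.apply_symm_apply]
      right_inv := by
        intro z
        apply Subtype.ext
        simp only [Subtype.coe_eta, Homeomorph.symm_apply_apply, Homeomorph.apply_symm_apply]
      continuous_toFun := by
        apply Continuous.subtype_mk
        apply continuous_subtype_val.comp
        apply g.continuous.comp
        apply Continuous.subtype_mk
        apply continuous_subtype_val.comp
        apply h.symm.continuous.comp
        exact Continuous.subtype_mk continuous_subtype_val _
      continuous_invFun := by
        apply Continuous.subtype_mk
        apply continuous_subtype_val.comp
        apply h.continuous.comp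
        apply Continuous.subtype_mk
        apply continuous_subtype_val.comp
        apply g.symm.continuous.comp
        exact Continuous.subtype_mk continuous_subtype_val _ }
  let Φ : E ≃ₜ E := GlueHS.extend φ
  have hΦsym : ∀ z : E, (Φ.symm z) i = z i := fun z => GlueHS.extend_symm_coord φ z
  -- forward glued map
  let F : E → E := fun x =>
    if hx : x ∈ A' then ↑(g ⟨x, hx⟩) else Φ ↑(h ⟨x, hBc x hx⟩)
  -- inverse glued map
  let Ginv : E → E := fun z =>
    if hz : 0 ≤ z i then ↑(g.symm ⟨z, hz⟩)
    else ↑(h.symm ⟨Φ.symm z, by show (Φ.symm z) i ≤ 0; rw [hΦsym]; exact (not_le.1 hz).le⟩)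
  -- agreement of the two pieces on the overlap
  have agree : ∀ x (hxA : x ∈ A') (hxB : x ∈ B'),
      (↑(g ⟨x, hxA⟩) : E) = Φ ↑(h ⟨x, hxB⟩) := by
    intro x hxA hxB
    have hxH : x ∈ H := by rw [← hinter]; exact ⟨hxA, hxB⟩
    have hy0 : (↑(h ⟨x, hxB⟩) : E) i = 0 := hH _ hxH
    rw [GlueHS.extend_of_zero φ hy0]
    show (↑(g ⟨x, hxA⟩) : E) = ↑(g ⟨↑(h.symm ⟨↑(h ⟨x, hxB⟩), _⟩), _⟩)
    have h1 : (↑(h.symm ⟨↑(h ⟨x, hxB⟩), hy0.le⟩) : E) = x := by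
      simp only [Subtype.coe_eta, Homeomorph.symm_apply_apply]
    exact congrArg _ (congrArg g (Subtype.ext h1.symm))
  have agree' : ∀ (z : E) (h0 : z i = 0) (hz : 0 ≤ z i) (hz' : (Φ.symm z) i ≤ 0),
      (↑(g.symm ⟨z, hz⟩) : E) = ↑(h.symm ⟨Φ.symm z, hz'⟩) := by
    intro z h0 hz hz'
    have h1 : (⟨Φ.symm z, hz'⟩ : {x : E | x i ≤ 0})
        = h ⟨↑(g.symm ⟨z, h0.ge⟩), hHB (gS z h0 h0.ge)⟩ := by
      apply Subtype.ext
      show Φ.symm z = _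
      rw [GlueHS.extend_symm_of_zero φ h0]
      rfl
    rw [h1, Homeomorph.symm_apply_apply]
  -- F and Ginv are mutually inverse
  have hLI : Function.LeftInverse Ginv F := by
    intro x
    by_cases hxA : x ∈ A'
    · have h1 : F x = ↑(g ⟨x, hxA⟩) := dif_pos hxA
      have h2 : 0 ≤ (↑(g ⟨x, hxA⟩) : E) i := (g ⟨x, hxA⟩).2
      show Ginv (F x) = x
      rw [h1]
      show (if hz : 0 ≤ (↑(g ⟨x, hxA⟩) : E) i then (↑(g.symm ⟨↑(g ⟨x, hxA⟩), hz⟩) : E)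
        else ↑(h.symm ⟨Φ.symm _, _⟩)) = x
      rw [dif_pos h2]
      simp only [Subtype.coe_eta, Homeomorph.symm_apply_apply]
    · have hxB := hBc x hxA
      have h1 : F x = Φ ↑(h ⟨x, hxB⟩) := dif_neg hxA
      have hyc : (Φ ↑(h ⟨x, hxB⟩) : E) i = (↑(h ⟨x, hxB⟩) : E) i :=
        GlueHS.extend_coord φ _
      have hyl : (↑(h ⟨x, hxB⟩) : E) i ≤ 0 := (h ⟨x, hxB⟩).2
      show Ginv (F x) = x
      rw [h1]
      show (if hz : 0 ≤ (Φ ↑(h ⟨x, hxB⟩) : E) i then (↑(g.symm ⟨_, hz⟩) : E)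
        else ↑(h.symm ⟨Φ.symm _, _⟩)) = x
      by_cases h0 : 0 ≤ (Φ ↑(h ⟨x, hxB⟩) : E) i
      · rw [dif_pos h0]
        have hz0 : (Φ ↑(h ⟨x, hxB⟩) : E) i = 0 := le_antisymm (hyc ▸ hyl) h0
        have hzz : (Φ.symm (Φ ↑(h ⟨x, hxB⟩)) : E) i ≤ 0 := by rw [hΦsym]; exact hz0.le
        rw [agree' _ hz0 h0 hzz]
        simp only [Homeomorph.symm_apply_apply, Subtype.coe_eta]
      · rw [dif_neg h0]
        simp only [Homeomorph.symm_apply_apply, Subtype.coe_eta]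
  have hRI : Function.RightInverse Ginv F := by
    intro z
    by_cases hz : 0 ≤ z i
    · have h1 : Ginv z = ↑(g.symm ⟨z, hz⟩) := dif_pos hz
      have h2 : (↑(g.symm ⟨z, hz⟩) : E) ∈ A' := (g.symm ⟨z, hz⟩).2
      show F (Ginv z) = z
      rw [h1]
      show (if hx : (↑(g.symm ⟨z, hz⟩) : E) ∈ A' then (↑(g ⟨_, hx⟩) : E)
        else Φ ↑(h ⟨_, _⟩)) = z
      rw [dif_pos h2]
      simp only [Subtype.coe_eta, Homeomorph.apply_symm_apply]
    · have h1 : Ginv z = ↑(h.symm ⟨Φ.symm z, by show (Φ.symm z) i ≤ 0; rw [hΦsym]; exact (not_le.1 hz).le⟩) :=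
        dif_neg hz
      show F (Ginv z) = z
      rw [h1]
      set x : E := ↑(h.symm ⟨Φ.symm z, by show (Φ.symm z) i ≤ 0; rw [hΦsym]; exact (not_le.1 hz).le⟩) with hxdef
      have hxB : x ∈ B' := (h.symm _).2
      have key : ∀ hb : x ∈ B', Φ ↑(h ⟨x, hb⟩) = z := by
        intro hb
        have : (⟨x, hb⟩ : B') = h.symm ⟨Φ.symm z, by show (Φ.symm z) i ≤ 0; rw [hΦsym]; exact (not_le.1 hz).le⟩ :=
          Subtype.ext hxdef
        rw [this, Homeomorph.apply_symm_apply]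
        simp only [Homeomorph.apply_symm_apply]
      show (if hx : x ∈ A' then (↑(g ⟨x, hx⟩) : E) else Φ ↑(h ⟨x, hBc x hx⟩)) = z
      by_cases hxA : x ∈ A'
      · rw [dif_pos hxA, agree x hxA hxB]
        exact key hxB
      · rw [dif_neg hxA]
        exact key (hBc x hxA)
  -- continuity of F
  have hFc : Continuous F := by
    apply GlueHS.continuous_of_union_closed hAcl hBcl hunion
    · rw [continuousOn_iff_continuous_restrict]
      have hres : A'.domRestrict F = fun p : A' => ↑(g p) := by
        funext p
        show F ↑p = _
        show (if hx : (p : E) ∈ A' then (↑(g ⟨↑p, hx⟩) : E) else Φ ↑(h ⟨↑p, _⟩)) = ↑(g p)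
        rw [dif_pos p.2]
      rw [hres]
      exact continuous_subtype_val.comp g.continuous
    · rw [continuousOn_iff_continuous_restrict]
      have hres : B'.domRestrict F = fun p : B' => Φ ↑(h p) := by
        funext p
        show F ↑p = _
        show (if hx : (p : E) ∈ A' then (↑(g ⟨↑p, hx⟩) : E) else Φ ↑(h ⟨↑p, _⟩)) = Φ ↑(h p)
        by_cases hpA : (p : E) ∈ A'
        · rw [dif_pos hpA]
          exact agree ↑p hpA p.2
        · rw [dif_neg hpA]
      rw [hres]
      exact Φ.continuous.comp (continuous_subtype_val.comp h.continuous)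
  -- continuity of Ginv
  have hUcl : IsClosed {x : E | 0 ≤ x i} := isClosed_le continuous_const GlueHS.cont_apply
  have hLcl : IsClosed {x : E | x i ≤ 0} := isClosed_le GlueHS.cont_apply continuous_const
  have hULcover : {x : E | 0 ≤ x i} ∪ {x : E | x i ≤ 0} = Set.univ := by
    apply Set.eq_univ_iff_forall.2
    intro x
    rcases le_total 0 (x i) with h1 | h1
    · exact Or.inl h1
    · exact Or.inr h1
  have hGc : Continuous Ginv := by
    apply GlueHS.continuous_of_union_closed hUcl hLcl hULcover
    · rw [continuousOn_iff_continuous_restrict]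
      have hres : ({x : E | 0 ≤ x i}).domRestrict Ginv
          = fun p : {x : E | 0 ≤ x i} => ↑(g.symm ⟨↑p, p.2⟩) := by
        funext p
        show Ginv ↑p = _
        show (if hz : 0 ≤ (p : E) i then (↑(g.symm ⟨↑p, hz⟩) : E)
          else ↑(h.symm ⟨Φ.symm ↑p, _⟩)) = ↑(g.symm ⟨↑p, p.2⟩)
        rw [dif_pos (show 0 ≤ (p : E) i from p.2)]
      rw [hres]
      apply continuous_subtype_val.comp
      exact g.symm.continuous.comp (Continuous.subtype_mk continuous_subtype_val _)
    · rw [continuousOn_iff_continuous_restrict]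
      have pf : ∀ p : {x : E | x i ≤ 0}, (Φ.symm ↑p : E) i ≤ 0 := by
        intro p; rw [hΦsym]; exact p.2
      have hres : ({x : E | x i ≤ 0}).domRestrict Ginv
          = fun p : {x : E | x i ≤ 0} => ↑(h.symm ⟨Φ.symm ↑p, pf p⟩) := by
        funext p
        show Ginv ↑p = _
        show (if hz : 0 ≤ (p : E) i then (↑(g.symm ⟨↑p, hz⟩) : E)
          else ↑(h.symm ⟨Φ.symm ↑p, _⟩)) = ↑(h.symm ⟨Φ.symm ↑p, pf p⟩)
        by_cases h0 : 0 ≤ (p : E) i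
        · rw [dif_pos h0]
          exact agree' ↑p (le_antisymm p.2 h0) h0 (pf p)
        · rw [dif_neg h0]
      rw [hres]
      apply continuous_subtype_val.comp
      apply h.symm.continuous.comp
      exact Continuous.subtype_mk (Φ.symm.continuous.comp continuous_subtype_val) _
  -- assemble the homeomorphism
  refine ⟨⟨⟨F, Ginv, hLI, hRI⟩, hFc, hGc⟩, ?_⟩
  apply Set.Subset.antisymm
  · rintro z ⟨x, hxH, rfl⟩
    have hxA := hHA hxH
    show F x ∈ {x : E | x i = 0}
    have h1 : F x = ↑(g ⟨x, hxA⟩) := dif_pos hxA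
    rw [h1]
    exact gH _ hxH
  · intro z hz
    have hz' : z ∈ {x : E | x i = 0} := hz
    rw [← hg] at hz'
    obtain ⟨p, hpH, hpz⟩ := hz'
    refine ⟨↑p, hpH, ?_⟩
    show F ↑p = z
    have h1 : F ↑p = ↑(g ⟨↑p, p.2⟩) := dif_pos p.2
    rw [h1, ← hpz]
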